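/- For every k with 0 < k ≤ 2, the integral of (x − y)^{−2} over the region Ω_k equals k: ∬_{Ω_k} (x − y)^{−2} dy dx = k (the key computation in Proposition: the measure of the thickened section for excursions). -/

import Mathlib

open MeasureTheory

/-- The region `J = ((−1,0) × (0,∞)) ∪ ((0,1) × (−∞,0)) ⊂ ℝ²`. -/
def regionJ : Set (ℝ × ℝ) :=
  (Set.Ioo (-1 : ℝ) 0 ×ˢ Set.Ioi (0 : ℝ)) ∪ (Set.Ioo (0 : ℝ) 1 ×ˢ Set.Iio (0 : ℝ))

/-- The region `Ω_k = {(x,y) ∈ J : |x − y| > 2/k}`. -/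
def omegaRegion (k : ℝ) : Set (ℝ × ℝ) := {p ∈ regionJ | 2 / k < |p.1 - p.2|}

open Set


lemma rpow_eq_inv_sq {c z : ℝ} (hc : 0 < c) (hz : z ∈ Ioi c) : z ^ (-2:ℝ) = (z^2)⁻¹ := by
  rw [Real.rpow_neg (le_of_lt (hc.trans hz)), show (2:ℝ) = ((2:ℕ):ℝ) by norm_num,
    Real.rpow_natCast]

lemma base_integrable {c : ℝ} (hc : 0 < c) : IntegrableOn (fun z : ℝ => (z^2)⁻¹) (Ioi c) := by
  have h := integrableOn_Ioi_rpow_of_lt (by norm_num : (-2:ℝ) < -1) hc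
  exact h.congr_fun (fun z hz => rpow_eq_inv_sq hc hz) measurableSet_Ioi

lemma base_integral {c : ℝ} (hc : 0 < c) : ∫ z in Ioi c, (z^2)⁻¹ = c⁻¹ := by
  have h := integral_Ioi_rpow_of_lt (by norm_num : (-2:ℝ) < -1) hc
  rw [setIntegral_congr_fun measurableSet_Ioi
      (show EqOn (fun z : ℝ => (z^2)⁻¹) (fun z : ℝ => z ^ (-2:ℝ)) (Ioi c) from
        fun z hz => (rpow_eq_inv_sq hc hz).symm), h]
  norm_num [Real.rpow_neg_one]

lemma inner_integrable {c : ℝ} (hc : 0 < c) (x : ℝ) :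
    IntegrableOn (fun y : ℝ => ((x - y)^2)⁻¹) (Ioi (x + c)) := by
  have hmp : MeasurePreserving (fun y : ℝ => y - x) volume volume :=
    measurePreserving_sub_right volume x
  have hemb : MeasurableEmbedding (fun y : ℝ => y - x) :=
    (MeasurableEquiv.subRight x).measurableEmbedding
  have hpre : (fun y : ℝ => y - x) ⁻¹' (Ioi c) = Ioi (x + c) := by
    ext y; simp [lt_sub_iff_add_lt']; constructor <;> intro h <;> linarith
  have := (hmp.integrableOn_comp_preimage hemb
    (f := fun z : ℝ => (z^2)⁻¹) (s := Ioi c)).2 (base_integrable hc)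
  rw [hpre] at this
  apply this.congr_fun ?_ measurableSet_Ioi
  intro y _
  simp only [Function.comp]
  ring_nf

lemma inner_integral {c : ℝ} (hc : 0 < c) (x : ℝ) :
    ∫ y in Ioi (x + c), ((x - y)^2)⁻¹ = c⁻¹ := by
  have hmp : MeasurePreserving (fun y : ℝ => y - x) volume volume :=
    measurePreserving_sub_right volume x
  have hemb : MeasurableEmbedding (fun y : ℝ => y - x) :=
    (MeasurableEquiv.subRight x).measurableEmbedding
  have hpre : (fun y : ℝ => y - x) ⁻¹' (Ioi c) = Ioi (x + c) := by
    ext y; simp [lt_sub_iff_add_lt']; constructor <;> intro h <;> linarith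
  have h := hmp.setIntegral_preimage_emb hemb (fun z : ℝ => (z^2)⁻¹) (Ioi c)
  rw [hpre] at h
  rw [← base_integral hc, ← h]
  apply setIntegral_congr_fun measurableSet_Ioi
  intro y _
  ring_nf

def pieceA (c : ℝ) : Set (ℝ × ℝ) := {p | p.1 ∈ Set.Ioo (-1:ℝ) 0 ∧ p.1 + c < p.2}
def pieceB (c : ℝ) : Set (ℝ × ℝ) := {p | p.1 ∈ Set.Ioo (0:ℝ) 1 ∧ p.2 < p.1 - c}

lemma measurableSet_pieceA (c : ℝ) : MeasurableSet (pieceA c) := by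
  have : pieceA c = (Prod.fst ⁻¹' Ioo (-1:ℝ) 0) ∩ {p : ℝ × ℝ | p.1 + c < p.2} := rfl
  rw [this]
  exact (measurable_fst measurableSet_Ioo).inter
    (measurableSet_lt (measurable_fst.add_const c) measurable_snd)

lemma measurableSet_pieceB (c : ℝ) : MeasurableSet (pieceB c) := by
  have : pieceB c = (Prod.fst ⁻¹' Ioo (0:ℝ) 1) ∩ {p : ℝ × ℝ | p.2 < p.1 - c} := rfl
  rw [this]
  exact (measurable_fst measurableSet_Ioo).inter
    (measurableSet_lt measurable_snd (measurable_fst.sub_const c))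

lemma sectionA {c : ℝ} (x : ℝ) :
    (fun y : ℝ => (pieceA c).indicator (fun p : ℝ × ℝ => ((p.1 - p.2)^2)⁻¹) (x, y)) =
      Set.indicator (Ioo (-1:ℝ) 0) (fun _ => (1:ℝ)) x •
        Set.indicator (Ioi (x+c)) (fun y : ℝ => ((x - y)^2)⁻¹) := by
  funext y
  by_cases hx : x ∈ Ioo (-1:ℝ) 0
  · rw [Set.indicator_of_mem hx, one_smul]
    by_cases hy : y ∈ Ioi (x+c)
    · rw [Set.indicator_of_mem hy, Set.indicator_of_mem (show (x,y) ∈ pieceA c from ⟨hx, hy⟩)]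
    · rw [Set.indicator_of_notMem hy,
        Set.indicator_of_notMem (fun h : (x,y) ∈ pieceA c => hy h.2)]
  · rw [Set.indicator_of_notMem hx, zero_smul,
      Set.indicator_of_notMem (fun h : (x,y) ∈ pieceA c => hx h.1)]
    rfl

lemma indicator_integrable {c : ℝ} (hc : 0 < c) :
    Integrable ((pieceA c).indicator (fun p : ℝ × ℝ => ((p.1 - p.2)^2)⁻¹))
      ((volume : Measure ℝ).prod volume) := by
  have hmeas : AEStronglyMeasurable
      ((pieceA c).indicator (fun p : ℝ × ℝ => ((p.1 - p.2)^2)⁻¹))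
      ((volume : Measure ℝ).prod volume) := by
    refine (Measurable.indicator ?_ (measurableSet_pieceA c)).aestronglyMeasurable
    exact ((measurable_fst.sub measurable_snd).pow_const 2).inv
  rw [integrable_prod_iff hmeas]
  constructor
  · refine Filter.Eventually.of_forall (fun x => ?_)
    rw [sectionA x]
    by_cases hx : x ∈ Ioo (-1:ℝ) 0
    · simp only [Set.indicator_of_mem hx, one_smul]
      exact (integrable_indicator_iff measurableSet_Ioi).2 (inner_integrable hc x)
    · rw [Set.indicator_of_notMem hx, zero_smul]
      exact integrable_zero _ _ _
  · have key : ∀ x : ℝ, (∫ y, ‖(pieceA c).indicator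
        (fun p : ℝ × ℝ => ((p.1 - p.2)^2)⁻¹) (x, y)‖) =
        Set.indicator (Ioo (-1:ℝ) 0) (fun _ => c⁻¹) x := by
      intro x
      rw [show (fun y : ℝ => ‖(pieceA c).indicator
          (fun p : ℝ × ℝ => ((p.1 - p.2)^2)⁻¹) (x, y)‖) =
          (fun y : ℝ => (pieceA c).indicator
          (fun p : ℝ × ℝ => ((p.1 - p.2)^2)⁻¹) (x, y)) from funext fun y =>
            Real.norm_of_nonneg (Set.indicator_nonneg
              (fun p _ => inv_nonneg.2 (sq_nonneg _)) _), sectionA x]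
      by_cases hx : x ∈ Ioo (-1:ℝ) 0
      · simp only [Set.indicator_of_mem hx, one_smul]
        rw [integral_indicator measurableSet_Ioi, inner_integral hc x]
      · simp [Set.indicator_of_notMem hx]
    simp only [key]
    exact (integrable_indicator_iff measurableSet_Ioo).2
      (integrableOn_const (by simp [Real.volume_Ioo]) (by simp))

lemma integral_pieceA {c : ℝ} (hc : 0 < c) :
    ∫ p in pieceA c, ((p.1 - p.2)^2)⁻¹ = c⁻¹ := by
  rw [← integral_indicator (measurableSet_pieceA c), Measure.volume_eq_prod,
    integral_prod _ (indicator_integrable hc)]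
  have key : ∀ x : ℝ, (∫ y, (pieceA c).indicator
      (fun p : ℝ × ℝ => ((p.1 - p.2)^2)⁻¹) (x, y)) =
      Set.indicator (Ioo (-1:ℝ) 0) (fun _ => c⁻¹) x := by
    intro x
    rw [sectionA x]
    by_cases hx : x ∈ Ioo (-1:ℝ) 0
    · simp only [Set.indicator_of_mem hx, one_smul]
      rw [integral_indicator measurableSet_Ioi, inner_integral hc x]
    · simp [Set.indicator_of_notMem hx]
  simp only [key]
  rw [integral_indicator measurableSet_Ioo, setIntegral_const, Real.volume_real_Ioo]
  norm_num

lemma pieceA_eq_preimage_neg (c : ℝ) : pieceA c = Neg.neg ⁻¹' (pieceB c) := by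
  ext ⟨x, y⟩
  simp only [pieceA, pieceB, Set.mem_setOf_eq, Set.mem_preimage, Prod.fst_neg, Prod.snd_neg,
    Set.mem_Ioo]
  constructor
  · rintro ⟨⟨h1, h2⟩, h3⟩; exact ⟨⟨by linarith, by linarith⟩, by linarith⟩
  · rintro ⟨⟨h1, h2⟩, h3⟩; exact ⟨⟨by linarith, by linarith⟩, by linarith⟩

lemma neg_mp : MeasurePreserving (Neg.neg : ℝ × ℝ → ℝ × ℝ) volume volume :=
  Measure.measurePreserving_neg volume

lemma neg_emb : MeasurableEmbedding (Neg.neg : ℝ × ℝ → ℝ × ℝ) :=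
  (MeasurableEquiv.neg (ℝ × ℝ)).measurableEmbedding

lemma integrableOn_pieceB {c : ℝ} (hc : 0 < c) :
    IntegrableOn (fun p : ℝ × ℝ => ((p.1 - p.2)^2)⁻¹) (pieceB c) := by
  have h := (neg_mp.integrableOn_comp_preimage neg_emb
    (f := fun p : ℝ × ℝ => ((p.1 - p.2)^2)⁻¹) (s := pieceB c))
  rw [← h, ← pieceA_eq_preimage_neg]
  have hA : IntegrableOn (fun p : ℝ × ℝ => ((p.1 - p.2)^2)⁻¹) (pieceA c) := by
    rw [IntegrableOn, Measure.volume_eq_prod]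
    exact (integrable_indicator_iff (measurableSet_pieceA c)).1 (indicator_integrable hc)
  apply hA.congr_fun ?_ (measurableSet_pieceA c)
  intro p _
  simp only [Function.comp, Prod.fst_neg, Prod.snd_neg]
  ring_nf

lemma integrableOn_pieceA {c : ℝ} (hc : 0 < c) :
    IntegrableOn (fun p : ℝ × ℝ => ((p.1 - p.2)^2)⁻¹) (pieceA c) := by
  rw [IntegrableOn, Measure.volume_eq_prod]
  exact (integrable_indicator_iff (measurableSet_pieceA c)).1 (indicator_integrable hc)

lemma integral_pieceB {c : ℝ} (hc : 0 < c) :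
    ∫ p in pieceB c, ((p.1 - p.2)^2)⁻¹ = c⁻¹ := by
  have h := neg_mp.setIntegral_preimage_emb neg_emb
    (fun p : ℝ × ℝ => ((p.1 - p.2)^2)⁻¹) (pieceB c)
  rw [← h, ← pieceA_eq_preimage_neg, ← integral_pieceA hc]
  apply setIntegral_congr_fun (measurableSet_pieceA c)
  intro p _
  simp only [Prod.fst_neg, Prod.snd_neg]
  ring_nf

lemma omega_decomp {k : ℝ} (hk0 : 0 < k) (hk2 : k ≤ 2) :
    omegaRegion k = pieceA (2 / k) ∪ pieceB (2 / k) := by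
  have hc1 : 1 ≤ 2 / k := (one_le_div hk0).2 hk2
  ext ⟨x, y⟩
  simp only [omegaRegion, regionJ, Set.mem_setOf_eq, Set.mem_union, Set.mem_prod,
    Set.mem_Ioo, Set.mem_Ioi, Set.mem_Iio, pieceA, pieceB, lt_abs]
  constructor
  · rintro ⟨h1 | h2, h3 | h3⟩
    · exact absurd h3 (by push_neg; nlinarith [h1.1.1, h1.1.2, h1.2])
    · exact Or.inl ⟨h1.1, by linarith⟩
    · exact Or.inr ⟨h2.1, by linarith⟩
    · exact absurd h3 (by push_neg; nlinarith [h2.1.1, h2.1.2, h2.2])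
  · rintro (⟨⟨h1, h2⟩, h3⟩ | ⟨⟨h1, h2⟩, h3⟩)
    · exact ⟨Or.inl ⟨⟨h1, h2⟩, by linarith⟩, Or.inr (by linarith)⟩
    · exact ⟨Or.inr ⟨⟨h1, h2⟩, by linarith⟩, Or.inl (by linarith)⟩

/-- For `0 < k ≤ 2`, `∬_{Ω_k} (x − y)^{−2} dy dx = k`. -/
theorem integral_omegaRegion (k : ℝ) (hk0 : 0 < k) (hk2 : k ≤ 2) :
    ∫ p in omegaRegion k, ((p.1 - p.2) ^ 2)⁻¹ = k := by
  have hc : 0 < 2 / k := div_pos two_pos hk0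
  rw [omega_decomp hk0 hk2,
    setIntegral_union (by
        rw [Set.disjoint_left]
        rintro ⟨x, y⟩ ⟨⟨_, hx2⟩, _⟩ ⟨⟨hx3, _⟩, _⟩
        exact absurd hx3 (not_lt.2 hx2.le))
      (measurableSet_pieceB _) (integrableOn_pieceA hc) (integrableOn_pieceB hc),
    integral_pieceA hc, integral_pieceB hc]
  field_simp
  norm_num
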